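/- arXiv:1309.7145 — 2 statements merged into one kernel-verified Lean document; each statement's English description precedes it below -/
import Mathlib

section
/- Let A be a cDFA over alphabet Σ with state set Q, start state q0 and transition function δ, let D₁,…,Dₙ ⊆ Σ be nonempty finite domains, and let D_N ⊆ ℕ be a nonempty finite domain. Fix i ∈ [1,n] and ℓ ∈ Dᵢ, and define Min(i,ℓ) = min over q ∈ Q of preMin(i−1,q) + inc + sufMin(i+1,q′), where δ(q,ℓ) = (q′,inc). Then there exist a domain-consistent string σ with σᵢ = ℓ and a value v ∈ D_N with cost(q0,σ) ≤ v if and only if Min(i,ℓ) ≤ max(D_N). -/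
/-- A counter-DFA over state type `Q` and alphabet `σ`: a start state and a total
transition function returning the successor state and the counter increment. -/
structure CDFA (Q : Type*) (σ : Type*) where
  q0 : Q
  δ : Q → σ → Q × ℕ

namespace CDFA

variable {Q σ : Type*}

/-- The state reached from `q` after consuming a string. -/
def run (A : CDFA Q σ) : Q → List σ → Q
  | q, [] => q
  | q, ℓ :: w => A.run (A.δ q ℓ).1 w

/-- The total counter increase from state `q` upon consuming a string. -/
def cost (A : CDFA Q σ) : Q → List σ → ℕ
  | _, [] => 0
  | q, ℓ :: w => (A.δ q ℓ).2 + A.cost (A.δ q ℓ).1 w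

end CDFA

namespace CDFA

variable {Q σ : Type*}

/-- `preMin A D i hi q` : the minimum cost (in `ℕ ∪ {∞}`) of a domain-consistent
prefix string of length `i` leading from the start state to state `q`
(`∞` if no such string reaches `q`). -/
noncomputable def preMin (A : CDFA Q σ) {n : ℕ} (D : Fin n → Finset σ)
    (i : ℕ) (hi : i ≤ n) (q : Q) : ℕ∞ :=
  sInf {c : ℕ∞ | ∃ s : Fin i → σ, (∀ j, s j ∈ D (Fin.castLE hi j)) ∧
    A.run A.q0 (List.ofFn s) = q ∧ (A.cost A.q0 (List.ofFn s) : ℕ∞) = c}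

/-- `preMax A D i hi q` : the maximum cost (in `ℕ ∪ {−∞}`) of a domain-consistent
prefix string of length `i` leading from the start state to state `q`
(`−∞` if no such string reaches `q`). -/
noncomputable def preMax (A : CDFA Q σ) {n : ℕ} (D : Fin n → Finset σ)
    (i : ℕ) (hi : i ≤ n) (q : Q) : WithBot ℕ :=
  sSup {c : WithBot ℕ | ∃ s : Fin i → σ, (∀ j, s j ∈ D (Fin.castLE hi j)) ∧
    A.run A.q0 (List.ofFn s) = q ∧ (A.cost A.q0 (List.ofFn s) : WithBot ℕ) = c}

/-- `sufMin A D i q` : the minimum cost of a domain-consistent suffix string for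
positions `i, …, n−1` (0-based), starting from state `q`. -/
noncomputable def sufMin (A : CDFA Q σ) {n : ℕ} (D : Fin n → Finset σ)
    (i : ℕ) (q : Q) : ℕ :=
  sInf {c : ℕ | ∃ s : Fin (n - i) → σ,
    (∀ j : Fin (n - i), s j ∈ D ⟨i + j.val, by have := j.isLt; omega⟩) ∧
    A.cost q (List.ofFn s) = c}

/-- `sufMax A D i q` : the maximum cost of a domain-consistent suffix string for
positions `i, …, n−1` (0-based), starting from state `q`. -/
noncomputable def sufMax (A : CDFA Q σ) {n : ℕ} (D : Fin n → Finset σ)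
    (i : ℕ) (q : Q) : ℕ :=
  sSup {c : ℕ | ∃ s : Fin (n - i) → σ,
    (∀ j : Fin (n - i), s j ∈ D ⟨i + j.val, by have := j.isLt; omega⟩) ∧
    A.cost q (List.ofFn s) = c}

end CDFA
namespace CDFA
variable {Q σ : Type*}

lemma run_append (A : CDFA Q σ) (q : Q) (w1 w2 : List σ) :
    A.run q (w1 ++ w2) = A.run (A.run q w1) w2 := by
  induction w1 generalizing q with
  | nil => rfl
  | cons a w ih => simp [run, ih]

lemma cost_append (A : CDFA Q σ) (q : Q) (w1 w2 : List σ) :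
    A.cost q (w1 ++ w2) = A.cost q w1 + A.cost (A.run q w1) w2 := by
  induction w1 generalizing q with
  | nil => simp [cost, run]
  | cons a w ih => simp [cost, run, ih]; omega

end CDFA

lemma ofFn_decomp {α : Type*} {n : ℕ} (s : Fin n → α) (i : Fin n) :
    List.ofFn s = List.ofFn (fun j : Fin i.val => s (j.castLE i.isLt.le)) ++
      s i :: List.ofFn (fun j : Fin (n - (i.val + 1)) => s ⟨i.val + 1 + j.val, by omega⟩) := by
  apply List.ext_getElem
  · simp; omega
  · intro j h1 h2
    simp only [List.getElem_ofFn]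
    rcases lt_trichotomy j i.val with h | h | h
    · rw [List.getElem_append_left (by simpa using h)]
      simp
    · rw [List.getElem_append_right (by simp; omega)]
      simp [h]
    · rw [List.getElem_append_right (by simp; omega)]
      simp only [List.length_ofFn]
      rw [List.getElem_cons]
      rw [dif_neg (by omega)]
      simp only [List.getElem_ofFn]
      congr 1
      exact Fin.ext (by simp; omega)

def glue {α : Type*} {n : ℕ} (i : Fin n) (ℓ : α) (pre : Fin i.val → α)
    (suf : Fin (n - (i.val + 1)) → α) : Fin n → α := fun j =>
  if h : j.val < i.val then pre ⟨j.val, h⟩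
  else if h2 : j.val = i.val then ℓ
  else suf ⟨j.val - (i.val + 1), by have := j.isLt; omega⟩

/-- Domain-consistency filtering for `cAutomatonAtMost`: a value `ℓ ∈ Dᵢ` appears in a
solution iff `Min(i,ℓ) = min_{q ∈ Q} (preMin(i−1,q) + inc + sufMin(i+1,q′))`, with
`δ(q,ℓ) = (q′,inc)`, is at most `max(D_N)` (positions 0-based). -/
theorem cAutomatonAtMost_value_support {Q σ : Type*} [Fintype Q] [Fintype σ]
    (A : CDFA Q σ) {n : ℕ} (D : Fin n → Finset σ) (hD : ∀ j, (D j).Nonempty)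
    (DN : Finset ℕ) (hDN : DN.Nonempty) (i : Fin n) (ℓ : σ) (hℓ : ℓ ∈ D i) :
    (∃ s : Fin n → σ, (∀ j, s j ∈ D j) ∧ s i = ℓ ∧
        ∃ v ∈ DN, A.cost A.q0 (List.ofFn s) ≤ v) ↔
      (⨅ q : Q, A.preMin D i.val i.isLt.le q + ((A.δ q ℓ).2 : ℕ∞) +
          (A.sufMin D (i.val + 1) (A.δ q ℓ).1 : ℕ∞)) ≤ (DN.max' hDN : ℕ∞) := by
  constructor
  · rintro ⟨s, hdom, hsi, v, hv, hcost⟩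
    set pre : Fin i.val → σ := fun j => s (j.castLE i.isLt.le) with hpre
    set suf : Fin (n - (i.val + 1)) → σ :=
      fun j => s ⟨i.val + 1 + j.val, by omega⟩ with hsuf
    set q : Q := A.run A.q0 (List.ofFn pre) with hq
    have hdc := ofFn_decomp s i
    rw [hsi] at hdc
    have hcosteq : A.cost A.q0 (List.ofFn s) =
        A.cost A.q0 (List.ofFn pre) + ((A.δ q ℓ).2 + A.cost (A.δ q ℓ).1 (List.ofFn suf)) := by
      rw [hdc, A.cost_append, ← hq]
      rfl
    have h1 : A.preMin D i.val i.isLt.le q ≤ (A.cost A.q0 (List.ofFn pre) : ℕ∞) :=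
      sInf_le ⟨pre, fun j => hdom _, rfl, rfl⟩
    have h2 : (A.sufMin D (i.val + 1) (A.δ q ℓ).1 : ℕ) ≤ A.cost (A.δ q ℓ).1 (List.ofFn suf) :=
      Nat.sInf_le ⟨suf, fun j => hdom _, rfl⟩
    calc (⨅ q : Q, A.preMin D i.val i.isLt.le q + ((A.δ q ℓ).2 : ℕ∞) +
          (A.sufMin D (i.val + 1) (A.δ q ℓ).1 : ℕ∞))
        ≤ A.preMin D i.val i.isLt.le q + ((A.δ q ℓ).2 : ℕ∞) +
          (A.sufMin D (i.val + 1) (A.δ q ℓ).1 : ℕ∞) := iInf_le _ q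
      _ ≤ (A.cost A.q0 (List.ofFn pre) : ℕ∞) + ((A.δ q ℓ).2 : ℕ∞) +
          ((A.cost (A.δ q ℓ).1 (List.ofFn suf) : ℕ) : ℕ∞) := by
          exact add_le_add (add_le_add_left h1 _) (by exact_mod_cast h2)
      _ = ((A.cost A.q0 (List.ofFn s) : ℕ) : ℕ∞) := by
          rw [hcosteq]; push_cast; ring
      _ ≤ ((DN.max' hDN : ℕ) : ℕ∞) := by
          exact_mod_cast hcost.trans (DN.le_max' v hv)
  · intro hmin
    haveI : Nonempty Q := ⟨A.q0⟩
    obtain ⟨q, hq⟩ := exists_eq_ciInf_of_finite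
      (f := fun q : Q => A.preMin D i.val i.isLt.le q + ((A.δ q ℓ).2 : ℕ∞) +
          (A.sufMin D (i.val + 1) (A.δ q ℓ).1 : ℕ∞))
    rw [← hq] at hmin
    -- preMin is finite, so attained
    have hfin : A.preMin D i.val i.isLt.le q ≠ ⊤ := by
      intro h
      rw [h] at hmin
      simp at hmin
    have hne : {c : ℕ∞ | ∃ s : Fin i.val → σ, (∀ j, s j ∈ D (Fin.castLE i.isLt.le j)) ∧
        A.run A.q0 (List.ofFn s) = q ∧ (A.cost A.q0 (List.ofFn s) : ℕ∞) = c}.Nonempty := by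
      by_contra h
      rw [Set.not_nonempty_iff_eq_empty] at h
      apply hfin
      unfold CDFA.preMin
      rw [h, sInf_empty]
    obtain ⟨pre, hpredom, hprerun, hprecost⟩ :
        ∃ s : Fin i.val → σ, (∀ j, s j ∈ D (Fin.castLE i.isLt.le j)) ∧
          A.run A.q0 (List.ofFn s) = q ∧
          (A.cost A.q0 (List.ofFn s) : ℕ∞) = A.preMin D i.val i.isLt.le q := csInf_mem hne
    -- sufMin attained
    have hsne : {c : ℕ | ∃ s : Fin (n - (i.val + 1)) → σ,
        (∀ j : Fin (n - (i.val + 1)), s j ∈ D ⟨i.val + 1 + j.val, by have := j.isLt; omega⟩) ∧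
        A.cost (A.δ q ℓ).1 (List.ofFn s) = c}.Nonempty :=
      ⟨_, fun j => (hD _).choose, fun j => (hD _).choose_spec, rfl⟩
    obtain ⟨suf, hsufdom, hsufcost⟩ :
        ∃ s : Fin (n - (i.val + 1)) → σ,
          (∀ j : Fin (n - (i.val + 1)),
            s j ∈ D ⟨i.val + 1 + j.val, by have := j.isLt; omega⟩) ∧
          A.cost (A.δ q ℓ).1 (List.ofFn s) = A.sufMin D (i.val + 1) (A.δ q ℓ).1 :=
      Nat.sInf_mem hsne
    -- assemble s
    set s : Fin n → σ := glue i ℓ pre suf with hs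
    have hsi : s i = ℓ := by simp [hs, glue]
    have hspre : (fun j : Fin i.val => s (j.castLE i.isLt.le)) = pre := by
      funext j
      simp only [hs, glue, Fin.coe_castLE, dif_pos j.isLt]
    have hssuf : (fun j : Fin (n - (i.val + 1)) => s ⟨i.val + 1 + j.val, by omega⟩) = suf := by
      funext j
      simp only [hs, glue]
      rw [dif_neg (by omega), dif_neg (by omega)]
      congr 1
      exact Fin.ext (by simp)
    refine ⟨s, ?_, hsi, DN.max' hDN, DN.max'_mem hDN, ?_⟩
    · intro j
      rcases lt_trichotomy j.val i.val with h | h | h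
      · have := hpredom ⟨j.val, h⟩
        have hj : Fin.castLE i.isLt.le (⟨j.val, h⟩ : Fin i.val) = j := Fin.ext rfl
        rw [hj] at this
        show s j ∈ D j
        rw [hs]
        unfold glue
        rw [dif_pos h]
        exact this
      · have hj : j = i := Fin.ext h
        subst hj
        simpa [hsi] using hℓ
      · have := hsufdom ⟨j.val - (i.val + 1), by have := j.isLt; omega⟩
        have hj : (⟨i.val + 1 + (j.val - (i.val + 1)), by have := j.isLt; omega⟩ : Fin n) = j :=
          Fin.ext (by simp; omega)
        rw [hj] at this
        show s j ∈ D j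
        rw [hs]
        unfold glue
        rw [dif_neg (by omega : ¬ j.val < i.val), dif_neg (by omega : ¬ j.val = i.val)]
        exact this
    · -- cost bound
      have hdc := ofFn_decomp s i
      rw [hsi, hspre, hssuf] at hdc
      have hcosteq : A.cost A.q0 (List.ofFn s) =
          A.cost A.q0 (List.ofFn pre) + ((A.δ q ℓ).2 + A.cost (A.δ q ℓ).1 (List.ofFn suf)) := by
        rw [hdc, A.cost_append, hprerun]
        rfl
      rw [hcosteq, hsufcost]
      have : ((A.cost A.q0 (List.ofFn pre) : ℕ) : ℕ∞) + ((A.δ q ℓ).2 : ℕ∞) +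
          ((A.sufMin D (i.val + 1) (A.δ q ℓ).1 : ℕ) : ℕ∞) ≤ ((DN.max' hDN : ℕ) : ℕ∞) := by
        rw [hprecost]; exact hmin
      have h' : A.cost A.q0 (List.ofFn pre) + (A.δ q ℓ).2 +
          A.sufMin D (i.val + 1) (A.δ q ℓ).1 ≤ DN.max' hDN := by
        exact_mod_cast this
      omega
end

section
/- Let a₁,…,a_k and s be natural numbers, and let A be the one-state cDFA over the alphabet Σ = {a₁,…,a_k, 0} whose unique state is both the start state and the target of every transition, where the transition reading symbol v increments the counter by v. Set Dᵢ = {0, aᵢ} for i ∈ [1,k]. Then the Subset-Sum instance ⟨{a₁,…,a_k}, s⟩ has a solution (i.e., there exists A ⊆ {1,…,k} with ∑_{i∈A} aᵢ = s) if and only if the constraint cAutomaton(s, ⟨x₁,…,x_k⟩, A) has a solution, i.e., there exists a string σ = σ₁⋯σ_k with σᵢ ∈ Dᵢ for all i and cost(q0,σ) = s. -/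
/-- The one-state counter-DFA used in the reduction from Subset-Sum: reading a symbol
`v` (a natural number) increments the counter by `v`. -/
def subsetSumCDFA : CDFA Unit ℕ :=
  ⟨(), fun _ v => ((), v)⟩


lemma subsetSumCDFA_cost (l : List ℕ) : subsetSumCDFA.cost () l = l.sum := by
  induction l with
  | nil => rfl
  | cons h t ih => simp only [CDFA.cost, List.sum_cons]; rw [show (subsetSumCDFA.δ () h).2 = h from rfl, ih]

/-- The Subset-Sum reduction: `⟨{a₁,…,a_k}, s⟩` has a solution iff the constraint
`cAutomaton(s, ⟨x₁,…,x_k⟩, A)` with domains `Dᵢ = {0, aᵢ}` has a solution. -/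
theorem subsetSum_iff_cAutomaton (k : ℕ) (a : Fin k → ℕ) (s : ℕ) :
    (∃ T : Finset (Fin k), ∑ i ∈ T, a i = s) ↔
      ∃ w : Fin k → ℕ, (∀ i, w i ∈ ({0, a i} : Finset ℕ)) ∧
        subsetSumCDFA.cost subsetSumCDFA.q0 (List.ofFn w) = s := by
  have key : ∀ w : Fin k → ℕ,
      subsetSumCDFA.cost subsetSumCDFA.q0 (List.ofFn w) = ∑ i, w i := by
    intro w
    rw [show subsetSumCDFA.q0 = () from rfl, subsetSumCDFA_cost, List.sum_ofFn]
  constructor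
  · rintro ⟨T, hT⟩
    refine ⟨fun i => if i ∈ T then a i else 0, fun i => ?_, ?_⟩
    · by_cases h : i ∈ T <;> simp [h]
    · rw [key, Finset.sum_ite_mem, Finset.univ_inter, hT]
  · rintro ⟨w, hw, hc⟩
    refine ⟨Finset.univ.filter (fun i => w i ≠ 0), ?_⟩
    rw [key] at hc
    rw [← hc]
    rw [Finset.sum_filter]
    apply Finset.sum_congr rfl
    intro i _
    have := hw i
    simp only [Finset.mem_insert, Finset.mem_singleton] at this
    rcases this with h | h <;> simp [h] <;> omega
end
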